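/- Suppose 1 < k < m < n/2 with n even. Then the linear system (1−c₁)x₁ + (1−c_m)x₂ = 1, (1−c₁²)(c_k − c_m)x₁ = (1−c_m²)(c₁ − c_k)x₂ in the unknowns (x₁, x₂) has a unique solution, and this solution satisfies x₁ > 0 and x₂ > 0. -/

import Mathlib

open Real

/-- cᵢ = cos(2iπ/n). -/
noncomputable def cc (n : ℕ) (i : ℤ) : ℝ := Real.cos (2 * i * π / n)

theorem stmt12 (n k m : ℕ) (hn : Even n) (hn6 : 6 ≤ n)
    (hk : 1 < k) (hkm : k < m) (hm : 2 * m < n) :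
    (∃! q : ℝ × ℝ,
      (1 - cc n 1) * q.1 + (1 - cc n m) * q.2 = 1 ∧
      (1 - cc n 1 ^ 2) * (cc n k - cc n m) * q.1 =
        (1 - cc n m ^ 2) * (cc n 1 - cc n k) * q.2) ∧
    (∀ q : ℝ × ℝ,
      ((1 - cc n 1) * q.1 + (1 - cc n m) * q.2 = 1 ∧
       (1 - cc n 1 ^ 2) * (cc n k - cc n m) * q.1 =
         (1 - cc n m ^ 2) * (cc n 1 - cc n k) * q.2) →
      0 < q.1 ∧ 0 < q.2) := by
  have hπ := Real.pi_pos
  have hn0 : (0:ℝ) < n := by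
    have : 0 < n := by omega
    exact_mod_cast this
  have key : ∀ i j : ℕ, i < j → 2 * j ≤ n → cc n j < cc n i := by
    intro i j hij hjn
    have hiR : (i:ℝ) < j := by exact_mod_cast hij
    have hjR : 2 * (j:ℝ) ≤ n := by exact_mod_cast hjn
    show Real.cos (2 * (j:ℤ) * π / n) < Real.cos (2 * (i:ℤ) * π / n)
    push_cast
    apply Real.cos_lt_cos_of_nonneg_of_le_pi
    · positivity
    · rw [div_le_iff₀ hn0]; nlinarith
    · rw [div_lt_div_iff₀ hn0 hn0]; nlinarith [mul_pos hπ hn0]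
  -- basic cosine bounds
  have h1k : cc n k < cc n 1 := key 1 k hk (by omega)
  have hkm' : cc n m < cc n k := key k m hkm (by omega)
  have hc1 : cc n 1 < 1 := by
    have := key 0 1 (by omega) (by omega)
    simpa [cc] using this
  have hcmlow : -1 < cc n m := by
    have h2 : Real.cos π < Real.cos (2 * (m:ℤ) * π / n) := by
      push_cast
      refine Real.cos_lt_cos_of_nonneg_of_le_pi (by positivity) le_rfl ?_
      rw [div_lt_iff₀ hn0]
      have : (2:ℝ) * m < n := by exact_mod_cast hm
      nlinarith
    rw [Real.cos_pi] at h2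
    exact h2
  set c1 := cc n 1
  set ck := cc n k
  set cm := cc n m
  set a := 1 - c1 with ha
  set b := 1 - cm with hb
  set A := (1 - c1 ^ 2) * (ck - cm) with hA
  set B := (1 - cm ^ 2) * (c1 - ck) with hB
  have hcm1 : cm < 1 := by linarith
  have hc1low : -1 < c1 := by linarith
  have haP : 0 < a := by linarith
  have hbP : 0 < b := by linarith
  have hAP : 0 < A := by
    have : 0 < 1 - c1 ^ 2 := by nlinarith
    have h2 : 0 < ck - cm := by linarith
    positivity
  have hBP : 0 < B := by
    have : 0 < 1 - cm ^ 2 := by nlinarith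
    have h2 : 0 < c1 - ck := by linarith
    positivity
  clear_value c1 ck cm
  clear_value a b A B
  set D := a * B + b * A with hD
  clear_value D
  have hDP : 0 < D := by rw [hD]; positivity
  have hsol : ∀ q : ℝ × ℝ,
      (a * q.1 + b * q.2 = 1 ∧ A * q.1 = B * q.2) →
      q.1 = B / D ∧ q.2 = A / D := by
    rintro ⟨x, y⟩ ⟨h1, h2⟩
    simp only at h1 h2 ⊢
    constructor
    · rw [eq_div_iff hDP.ne']
      linear_combination B * h1 + b * h2 + x * hD
    · rw [eq_div_iff hDP.ne']
      linear_combination A * h1 - a * h2 + y * hD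
  constructor
  · refine ⟨(B / D, A / D), ⟨?_, ?_⟩, ?_⟩
    · show a * (B / D) + b * (A / D) = 1
      rw [← mul_div_assoc, ← mul_div_assoc, ← add_div, ← hD, div_self hDP.ne']
    · show A * (B / D) = B * (A / D)
      rw [← mul_div_assoc, ← mul_div_assoc, mul_comm]
    · intro q hq
      obtain ⟨hx, hy⟩ := hsol q hq
      exact Prod.ext hx hy
  · intro q hq
    obtain ⟨hx, hy⟩ := hsol q hq
    constructor
    · rw [hx]; positivity
    · rw [hy]; positivity
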